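/- Let G and H be finitely generated groups, let (X,μ,T) be an ergodic G-system, let U ⊆ X be measurable with μ(U) > 0, and let σ, τ : G × X → H be two measurable cocycles over T such that for every g ∈ G, σ(g,x) = τ(g,x) for μ-a.e. x ∈ U ∩ T^{g^{-1}}U. Then σ and τ are cohomologous over (X,μ,T). -/

import Mathlib

open MeasureTheory

lemma countable_of_fg (G : Type*) [Group G] [Group.FG G] : Countable G := by
  obtain ⟨S, hScl, hSfin⟩ := Group.fg_iff.mp ‹Group.FG G›
  haveI := hSfin.to_subtype
  haveI : DecidableEq S := Classical.decEq _
  haveI : Countable (FreeGroup S) := FreeGroup.toWord_injective.countable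
  have hsurj : Function.Surjective (FreeGroup.lift ((↑) : S → G)) := by
    rw [← MonoidHom.range_eq_top, FreeGroup.range_lift_eq_closure, Subtype.range_coe, hScl]
  exact hsurj.countable

open Classical in
noncomputable def auxSel {G X : Type*} [Group G] (T : G → X → X) (U : Set X) (f : ℕ → G)
    (x : X) : G :=
  if h : ∃ n, T (f n) x ∈ U then f (Nat.find h) else 1

lemma auxSel_spec {G X : Type*} [Group G] (T : G → X → X) (U : Set X) (f : ℕ → G)
    (x : X) (h : ∃ n, T (f n) x ∈ U) : T (auxSel T U f x) x ∈ U := by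
  classical
  rw [auxSel, dif_pos h]
  exact Nat.find_spec h

lemma auxSel_meas {G X : Type*} [Group G] [MeasurableSpace X] (T : G → X → X) (U : Set X)
    (hU : MeasurableSet U) (hTm : ∀ g : G, Measurable (T g)) (f : ℕ → G) (g : G) :
    MeasurableSet {x : X | auxSel T U f x = g} := by
  classical
  have hAn : ∀ n : ℕ, MeasurableSet {x : X | T (f n) x ∈ U ∧ ∀ m < n, T (f m) x ∉ U} := by
    intro n
    have : {x : X | T (f n) x ∈ U ∧ ∀ m < n, T (f m) x ∉ U} =
        (T (f n) ⁻¹' U) ∩ ⋂ m : ℕ, {x : X | m < n → T (f m) x ∉ U} := by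
      ext x; simp [Set.mem_iInter]
    rw [this]
    refine ((hTm (f n)) hU).inter (MeasurableSet.iInter fun m => ?_)
    by_cases hm : m < n
    · have : {x : X | m < n → T (f m) x ∉ U} = (T (f m) ⁻¹' U)ᶜ := by ext x; simp [hm]
      rw [this]; exact ((hTm (f m)) hU).compl
    · have : {x : X | m < n → T (f m) x ∉ U} = Set.univ := by ext x; simp [hm]
      rw [this]; exact MeasurableSet.univ
  have heq : {x : X | auxSel T U f x = g} =
      (⋃ n : ℕ, {x : X | f n = g ∧ (T (f n) x ∈ U ∧ ∀ m < n, T (f m) x ∉ U)}) ∪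
      ({x : X | ∃ n, T (f n) x ∈ U}ᶜ ∩ {x : X | (1 : G) = g}) := by
    ext x
    simp only [Set.mem_setOf_eq, Set.mem_union, Set.mem_iUnion, Set.mem_inter_iff,
      Set.mem_compl_iff]
    constructor
    · intro hax
      by_cases h : ∃ n, T (f n) x ∈ U
      · rw [auxSel, dif_pos h] at hax
        exact Or.inl ⟨Nat.find h, hax, Nat.find_spec h, fun m hm => Nat.find_min h hm⟩
      · rw [auxSel, dif_neg h] at hax
        exact Or.inr ⟨h, hax⟩
    · rintro (⟨n, hfn, hTn, hmin⟩ | ⟨hnex, h1g⟩)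
      · have hex : ∃ m, T (f m) x ∈ U := ⟨n, hTn⟩
        have hfind : Nat.find hex = n := by
          rw [Nat.find_eq_iff]
          exact ⟨hTn, fun m hm => hmin m hm⟩
        rw [auxSel, dif_pos hex, hfind, hfn]
      · rw [auxSel, dif_neg hnex, h1g]
  rw [heq]
  have hEx : MeasurableSet {x : X | ∃ n, T (f n) x ∈ U} := by
    have : {x : X | ∃ n, T (f n) x ∈ U} = ⋃ n : ℕ, T (f n) ⁻¹' U := by ext x; simp
    rw [this]; exact MeasurableSet.iUnion fun n => (hTm (f n)) hU
  refine MeasurableSet.union (MeasurableSet.iUnion fun n => ?_) (hEx.compl.inter ?_)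
  · by_cases hfn : f n = g
    · have : {x : X | f n = g ∧ (T (f n) x ∈ U ∧ ∀ m < n, T (f m) x ∉ U)} =
          {x : X | T (f n) x ∈ U ∧ ∀ m < n, T (f m) x ∉ U} := by ext x; simp [hfn]
      rw [this]; exact hAn n
    · have : {x : X | f n = g ∧ (T (f n) x ∈ U ∧ ∀ m < n, T (f m) x ∉ U)} = ∅ := by
        ext x; simp [hfn]
      rw [this]; exact MeasurableSet.empty
  · by_cases h1g : (1 : G) = g
    · have : {x : X | (1 : G) = g} = Set.univ := by ext x; simp [h1g]
      rw [this]; exact MeasurableSet.univ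
    · have : {x : X | (1 : G) = g} = ∅ := by ext x; simp [h1g]
      rw [this]; exact MeasurableSet.empty

theorem stmt4 {G H X : Type*} [Group G] [Group H] [Group.FG G] [Group.FG H]
    [MeasurableSpace X] [StandardBorelSpace X]
    (μ : Measure X) [IsProbabilityMeasure μ]
    -- a measurable μ-preserving action T of G
    (T : G → X → X) (hT1 : T 1 = id) (hTmul : ∀ g k : G, T (g * k) = T g ∘ T k)
    (hTmp : ∀ g : G, MeasurePreserving (T g) μ μ)
    -- ergodicity
    (herg : ∀ A : Set X, MeasurableSet A →
      (∀ g : G, μ (symmDiff (T g ⁻¹' A) A) = 0) → μ A = 0 ∨ μ A = 1)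
    (U : Set X) (hU : MeasurableSet U) (hUpos : 0 < μ U)
    -- two measurable cocycles σ, τ over T
    (σ τ : G → X → H)
    (hσmeas : ∀ (g : G) (h : H), MeasurableSet {x : X | σ g x = h})
    (hτmeas : ∀ (g : G) (h : H), MeasurableSet {x : X | τ g x = h})
    (hσcoc : ∀ (g k : G) (x : X), σ (g * k) x = σ g (T k x) * σ k x)
    (hτcoc : ∀ (g k : G) (x : X), τ (g * k) x = τ g (T k x) * τ k x)
    -- which agree a.e. on the domain of the partial cocycle
    (hagree : ∀ g : G, ∀ᵐ x ∂μ, x ∈ U → T g x ∈ U → σ g x = τ g x) :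
    -- then σ and τ are cohomologous over (X, μ, T)
    ∃ η : X → H, (∀ h : H, MeasurableSet {x : X | η x = h}) ∧
      ∀ g : G, ∀ᵐ x ∂μ, σ g x = (η (T g x))⁻¹ * τ g x * η x := by
  classical
  haveI : Countable G := countable_of_fg G
  haveI : Countable H := countable_of_fg H
  have hTm : ∀ g : G, Measurable (T g) := fun g => (hTmp g).measurable
  obtain ⟨f, hf⟩ : ∃ f : ℕ → G, Function.Surjective f := exists_surjective_nat G
  set a : X → G := auxSel T U f with ha
  set η : X → H := fun x => (τ (a x) x)⁻¹ * σ (a x) x with hη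
  -- the set of points that visit U
  set V : Set X := {x : X | ∃ g : G, T g x ∈ U} with hV
  have hVmeas : MeasurableSet V := by
    have : V = ⋃ g : G, T g ⁻¹' U := by ext x; simp [hV]
    rw [this]; exact MeasurableSet.iUnion fun g => (hTm g) hU
  have hVinv : ∀ g : G, T g ⁻¹' V = V := by
    intro g
    ext x
    simp only [Set.mem_preimage, hV, Set.mem_setOf_eq]
    constructor
    · rintro ⟨k, hk⟩
      refine ⟨k * g, ?_⟩
      rw [hTmul k g]; exact hk
    · rintro ⟨k, hk⟩
      refine ⟨k * g⁻¹, ?_⟩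
      have : T (k * g⁻¹) (T g x) = T k x := by
        have := congrFun (hTmul (k * g⁻¹) g) x
        rw [inv_mul_cancel_right] at this
        exact this.symm
      rw [this]; exact hk
  have hVnull : ∀ g : G, μ (symmDiff (T g ⁻¹' V) V) = 0 := by
    intro g
    rw [hVinv g, symmDiff_self, Set.bot_eq_empty]
    exact measure_empty
  have hVone : μ V = 1 := by
    rcases herg V hVmeas hVnull with h0 | h1
    · exfalso
      have hUV : U ⊆ V := fun x hx => ⟨1, by rw [hT1]; exact hx⟩
      have : μ U ≤ μ V := measure_mono hUV
      rw [h0] at this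
      exact absurd (le_antisymm this zero_le) (ne_of_gt hUpos)
    · exact h1
  have hVae : ∀ᵐ x ∂μ, x ∈ V := by
    rw [ae_iff]
    have h2 : {x : X | ¬ x ∈ V} = Vᶜ := rfl
    rw [h2, measure_compl hVmeas (measure_ne_top μ V), measure_univ, hVone, tsub_self]
  -- pulling back a.e. statements
  have hpull : ∀ (g : G) (p : X → Prop), MeasurableSet {y : X | p y} → (∀ᵐ y ∂μ, p y) →
      (∀ᵐ x ∂μ, p (T g x)) := by
    intro g p hp hae
    rw [ae_iff] at hae ⊢
    have h1 : {x : X | ¬ p (T g x)} = T g ⁻¹' {y : X | p y}ᶜ := rfl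
    rw [h1, (hTmp g).measure_preimage hp.compl.nullMeasurableSet]
    exact hae
  -- σ g agrees with τ g on a measurable set
  have hagreeSet : ∀ g : G, MeasurableSet {y : X | σ g y = τ g y} := by
    intro g
    have : {y : X | σ g y = τ g y} = ⋃ h : H, ({y : X | σ g y = h} ∩ {y : X | τ g y = h}) := by
      ext y; simp only [Set.mem_setOf_eq, Set.mem_iUnion, Set.mem_inter_iff]
      constructor
      · intro h; exact ⟨τ g y, h, rfl⟩
      · rintro ⟨h, h1, h2⟩; rw [h1, h2]
    rw [this]
    exact MeasurableSet.iUnion fun h => (hσmeas g h).inter (hτmeas g h)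
  -- the main a.e. agreement statement at all "return" pairs
  have hW : ∀ᵐ x ∂μ, ∀ p q : G, T p x ∈ U → T q x ∈ U →
      σ (q * p⁻¹) (T p x) = τ (q * p⁻¹) (T p x) := by
    rw [ae_all_iff]
    intro p
    rw [ae_all_iff]
    intro q
    have hmeas : MeasurableSet {y : X | y ∈ U → T (q * p⁻¹) y ∈ U →
        σ (q * p⁻¹) y = τ (q * p⁻¹) y} := by
      have : {y : X | y ∈ U → T (q * p⁻¹) y ∈ U → σ (q * p⁻¹) y = τ (q * p⁻¹) y} =
          Uᶜ ∪ (T (q * p⁻¹) ⁻¹' U)ᶜ ∪ {y : X | σ (q * p⁻¹) y = τ (q * p⁻¹) y} := by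
        ext y
        simp only [Set.mem_setOf_eq, Set.mem_union, Set.mem_compl_iff, Set.mem_preimage]
        tauto
      rw [this]
      exact (hU.compl.union ((hTm _) hU).compl).union (hagreeSet _)
    have hpq := hpull p _ hmeas (hagree (q * p⁻¹))
    filter_upwards [hpq] with x hx hpU hqU
    have hTq : T (q * p⁻¹) (T p x) = T q x := by
      have := congrFun (hTmul (q * p⁻¹) p) x
      rw [inv_mul_cancel_right] at this
      exact this.symm
    exact hx hpU (by rw [hTq]; exact hqU)
  have haU : ∀ x : X, x ∈ V → T (a x) x ∈ U := by
    intro x hx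
    obtain ⟨g, hg⟩ := hx
    obtain ⟨n, rfl⟩ := hf g
    exact auxSel_spec T U f x ⟨n, hg⟩
  refine ⟨η, ?_, ?_⟩
  · -- measurability of η
    intro h
    have : {x : X | η x = h} = ⋃ g : G, ⋃ h1 : H,
        ({x : X | a x = g} ∩ {x : X | τ g x = h1} ∩ {x : X | σ g x = h1 * h}) := by
      ext x
      simp only [Set.mem_setOf_eq, Set.mem_iUnion, Set.mem_inter_iff, hη]
      constructor
      · intro hx
        exact ⟨a x, τ (a x) x, ⟨rfl, rfl⟩, by rw [← hx, mul_inv_cancel_left]⟩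
      · rintro ⟨g, h1, ⟨hag, hτg⟩, hσg⟩
        rw [hag, hτg, hσg, inv_mul_cancel_left]
    rw [this]
    exact MeasurableSet.iUnion fun g => MeasurableSet.iUnion fun h1 =>
      ((auxSel_meas T U hU hTm f g).inter (hτmeas g h1)).inter (hσmeas g (h1 * h))
  · -- the cohomology identity
    intro g
    have hVg : ∀ᵐ x ∂μ, T g x ∈ V := hpull g _ hVmeas hVae
    filter_upwards [hVae, hVg, hW] with x hxV hgV hxW
    set b : G := a (T g x) with hb
    set c : G := b * g with hc
    have hax : T (a x) x ∈ U := haU x hxV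
    have hbx : T b (T g x) ∈ U := haU (T g x) hgV
    have hcx : T c x ∈ U := by
      have : T c x = T b (T g x) := congrFun (hTmul b g) x
      rw [this]; exact hbx
    -- well-definedness: η x computed via `a x` equals the value via `c`
    have key : (τ (a x) x)⁻¹ * σ (a x) x = (τ c x)⁻¹ * σ c x := by
      have hs : σ c x = σ (c * (a x)⁻¹) (T (a x) x) * σ (a x) x := by
        have := hσcoc (c * (a x)⁻¹) (a x) x
        rwa [inv_mul_cancel_right] at this
      have ht : τ c x = τ (c * (a x)⁻¹) (T (a x) x) * τ (a x) x := by
        have := hτcoc (c * (a x)⁻¹) (a x) x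
        rwa [inv_mul_cancel_right] at this
      have hagr : σ (c * (a x)⁻¹) (T (a x) x) = τ (c * (a x)⁻¹) (T (a x) x) :=
        hxW (a x) c hax hcx
      rw [hs, ht, hagr]
      group
    have hηx : η x = (τ c x)⁻¹ * σ c x := key
    have hηg : η (T g x) = (τ b (T g x))⁻¹ * σ b (T g x) := rfl
    have hsc : σ c x = σ b (T g x) * σ g x := hσcoc b g x
    have htc : τ c x = τ b (T g x) * τ g x := hτcoc b g x
    rw [hηg, hηx, hsc, htc]
    group
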